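/- Let Ω be a countable set, G a closed subgroup of Sym(Ω), and {Σᵢ : i ∈ I} a family of G-invariant subsets of Ω such that each element of G moves only finitely many elements of each Σᵢ, and such that ⋃_{i∈I} Σᵢ = Ω. Then G acts on each Σᵢ as a finite group of permutations; equivalently, G pointwise fixes all but a finite subset of each Σᵢ. -/

import Mathlib

open scoped Cardinal ENNReal

universe u

variable {Ω : Type u}

/-- The pointwise stabilizer of a set `s` inside a subgroup `G` of `Sym(Ω)`. -/
def pstab (G : Subgroup (Equiv.Perm Ω)) (s : Set Ω) : Subgroup (Equiv.Perm Ω) where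
  carrier := {g | g ∈ G ∧ ∀ x ∈ s, g x = x}
  one_mem' := ⟨G.one_mem, fun _ _ => rfl⟩
  mul_mem' := by
    rintro a b ⟨haG, ha⟩ ⟨hbG, hb⟩
    refine ⟨G.mul_mem haG hbG, fun x hx => ?_⟩
    simp [Equiv.Perm.mul_apply, hb x hx, ha x hx]
  inv_mem' := by
    rintro a ⟨haG, ha⟩
    refine ⟨G.inv_mem haG, fun x hx => ?_⟩
    conv_lhs => rw [← ha x hx]
    exact Equiv.symm_apply_apply a x

/-- For a family `A` of subsets of `Ω`, the subgroup of permutations carrying each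
member of `A` onto itself. -/
def SAgrp (A : Set (Set Ω)) : Subgroup (Equiv.Perm Ω) where
  carrier := {f | ∀ s ∈ A, (f : Ω → Ω) '' s = s}
  one_mem' := fun s _ => by simp
  mul_mem' := by
    intro a b ha hb s hs
    rw [Equiv.Perm.coe_mul, Set.image_comp, hb s hs, ha s hs]
  inv_mem' := by
    intro a ha s hs
    conv_lhs => rw [← ha s hs]
    rw [← Set.image_comp]
    simp

/-- `G₁ ≼_κ G₂` : there is a set `U` of permutations of cardinality `< κ` with
`G₁ ≤ ⟨G₂ ∪ U⟩`. -/
def Prec (κ : Cardinal.{u}) (G₁ G₂ : Subgroup (Equiv.Perm Ω)) : Prop :=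
  ∃ U : Set (Equiv.Perm Ω), #U < κ ∧
    G₁ ≤ Subgroup.closure ((G₂ : Set (Equiv.Perm Ω)) ∪ U)

/-- `G₁ ≈_κ G₂`. -/
def CApprox (κ : Cardinal.{u}) (G₁ G₂ : Subgroup (Equiv.Perm Ω)) : Prop :=
  Prec κ G₁ G₂ ∧ Prec κ G₂ G₁

/-- `G₁ ≼ G₂` (i.e. `≼_{ℵ₀}`, with `U` finite). -/
def PrecF (G₁ G₂ : Subgroup (Equiv.Perm Ω)) : Prop :=
  ∃ U : Set (Equiv.Perm Ω), U.Finite ∧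
    G₁ ≤ Subgroup.closure ((G₂ : Set (Equiv.Perm Ω)) ∪ U)

/-- `G₁ ≈ G₂` (i.e. `≈_{ℵ₀}`). -/
def ApproxF (G₁ G₂ : Subgroup (Equiv.Perm Ω)) : Prop :=
  PrecF G₁ G₂ ∧ PrecF G₂ G₁

/-- A generalized metric: a `[0,∞]`-valued metric. -/
structure IsGenMetric (d : Ω → Ω → ℝ≥0∞) : Prop where
  eq_zero_iff : ∀ α β, d α β = 0 ↔ α = β
  symm : ∀ α β, d α β = d β α
  triangle : ∀ α β γ, d α γ ≤ d α β + d β γ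

/-- Open ball for a generalized metric. -/
def gball (d : Ω → Ω → ℝ≥0∞) (α : Ω) (r : ℝ≥0∞) : Set Ω := {β | d α β < r}

/-- `(Ω, d)` is `κ`-uncrowded: every ball of finite radius has `< κ` elements. -/
def Uncrowded (κ : Cardinal.{u}) (d : Ω → Ω → ℝ≥0∞) : Prop :=
  ∀ (α : Ω) (r : ℝ≥0∞), r < ⊤ → #(gball d α r) < κ

/-- `(Ω, d)` is uniformly `κ`-uncrowded. -/
def UnifUncrowded (κ : Cardinal.{u}) (d : Ω → Ω → ℝ≥0∞) : Prop :=
  ∀ r : ℝ≥0∞, r < ⊤ → ∃ lam : Cardinal.{u}, lam < κ ∧ ∀ α : Ω, #(gball d α r) ≤ lam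

/-- `g` is bounded with respect to `d` : `‖g‖_d = ⨆ α, d α (αg) < ∞`. -/
def BoundedPerm (d : Ω → Ω → ℝ≥0∞) (g : Equiv.Perm Ω) : Prop :=
  (⨆ α : Ω, d α (g α)) < ⊤

/-- The function topology on `Sym(Ω)`: induced from the product topology on `Ω → Ω`
with `Ω` discrete. -/
def permTop (Ω : Type u) : TopologicalSpace (Equiv.Perm Ω) :=
  TopologicalSpace.induced (fun g : Equiv.Perm Ω => (g : Ω → Ω))
    (@Pi.topologicalSpace Ω (fun _ => Ω) (fun _ => ⊥))

/-- `G` is closed in `Sym(Ω)` in the function topology. -/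
def FTClosed (G : Subgroup (Equiv.Perm Ω)) : Prop :=
  @IsClosed _ (permTop Ω) (G : Set (Equiv.Perm Ω))

/-- `G` is discrete in the function topology. -/
def FTDiscrete (G : Subgroup (Equiv.Perm Ω)) : Prop :=
  @DiscreteTopology G
    (TopologicalSpace.induced (fun x : G => (x : Equiv.Perm Ω)) (permTop Ω))

/-- The orbit of `α` under a subgroup `H ≤ Sym(Ω)`. -/
def orb (H : Subgroup (Equiv.Perm Ω)) (α : Ω) : Set Ω := {β | ∃ g ∈ H, g α = β}

/-- A partition of `Ω`: a set of disjoint nonempty subsets with union `Ω`. -/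
def IsPartition (A : Set (Set Ω)) : Prop :=
  (∀ s ∈ A, s.Nonempty) ∧ A.PairwiseDisjoint id ∧ ⋃₀ A = Set.univ

/-- `A ∈ 𝒫`: a partition of `Ω` into finite subsets of unbounded cardinality. -/
def MemP (A : Set (Set Ω)) : Prop :=
  IsPartition A ∧ (∀ s ∈ A, s.Finite) ∧ ∀ n : ℕ, ∃ s ∈ A, (n : ℕ∞) < s.encard

/-- `A ∈ 𝒬`: a partition of `Ω` with a common finite bound on the cardinalities of
its members, infinitely many of which have more than one element. -/
def MemQ (A : Set (Set Ω)) : Prop :=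
  IsPartition A ∧ (∃ n : ℕ, ∀ s ∈ A, s.encard ≤ (n : ℕ∞)) ∧
    {s | s ∈ A ∧ 1 < s.encard}.Infinite

/-- The subgroup `FN(Ω,d)` of permutations of finite norm with respect to a
generalized metric `d`. -/
def FN (d : Ω → Ω → ℝ≥0∞) (hd : IsGenMetric d) : Subgroup (Equiv.Perm Ω) where
  carrier := {g | (⨆ α : Ω, d α (g α)) < ⊤}
  one_mem' := by
    have h : (⨆ α : Ω, d α ((1 : Equiv.Perm Ω) α)) ≤ 0 :=
      iSup_le fun α => le_of_eq ((hd.eq_zero_iff α ((1 : Equiv.Perm Ω) α)).2 rfl)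
    exact lt_of_le_of_lt h (by simp)
  mul_mem' := by
    intro a b ha hb
    have h : (⨆ α : Ω, d α ((a * b) α)) ≤
        (⨆ α : Ω, d α (b α)) + (⨆ α : Ω, d α (a α)) := by
      refine iSup_le fun α => ?_
      calc d α ((a * b) α) = d α (a (b α)) := by rw [Equiv.Perm.mul_apply]
        _ ≤ d α (b α) + d (b α) (a (b α)) := hd.triangle _ _ _
        _ ≤ _ := add_le_add (le_iSup (fun α : Ω => d α (b α)) α)
              (le_iSup (fun β : Ω => d β (a β)) (b α))
    exact lt_of_le_of_lt h (ENNReal.add_lt_top.2 ⟨hb, ha⟩)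
  inv_mem' := by
    intro a ha
    have h : (⨆ α : Ω, d α (a⁻¹ α)) ≤ ⨆ β : Ω, d β (a β) := by
      refine iSup_le fun α => ?_
      have e : d α (a⁻¹ α) = d (a⁻¹ α) (a (a⁻¹ α)) := by
        rw [show a (a⁻¹ α) = α from Equiv.apply_symm_apply a α]; exact hd.symm _ _
      rw [e]
      exact le_iSup (fun β : Ω => d β (a β)) (a⁻¹ α)
    exact lt_of_le_of_lt h ha

section HjorthAux

theorem Equiv.Perm.inv_apply_self {α : Type*} (f : Equiv.Perm α) (x : α) : f⁻¹ (f x) = x :=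
  Equiv.symm_apply_apply f x

theorem Equiv.Perm.apply_inv_self {α : Type*} (f : Equiv.Perm α) (x : α) : f (f⁻¹ x) = x :=
  Equiv.apply_symm_apply f x

def hjMov {I : Type*} (G : Subgroup (Equiv.Perm Ω)) (T : I → Set Ω) (i : I)
    (B : Finset Ω) : Set Ω :=
  {x | x ∈ T i ∧ ∃ g : Equiv.Perm Ω, g ∈ G ∧ (∀ b ∈ B, g b = b) ∧ g x ≠ x}

lemma hjorth_approx_mem (G : Subgroup (Equiv.Perm Ω)) (hG : FTClosed G)
    (p : Equiv.Perm Ω)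
    (h : ∀ W : Finset Ω, ∃ g ∈ G, ∀ ω ∈ W, (g : Equiv.Perm Ω) ω = p ω) : p ∈ G := by
  by_contra hp
  letI tΩ : TopologicalSpace Ω := ⊥
  letI tF : TopologicalSpace (Ω → Ω) := Pi.topologicalSpace
  have hopen : @IsOpen _ (permTop Ω) ((G : Set (Equiv.Perm Ω))ᶜ) := hG.isOpen_compl
  have hopen' : @IsOpen _ (TopologicalSpace.induced
      (fun g : Equiv.Perm Ω => (g : Ω → Ω)) tF) ((G : Set (Equiv.Perm Ω))ᶜ) := hopen
  obtain ⟨V, hV, hVeq⟩ := isOpen_induced_iff.mp hopen'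
  have hpV : (p : Ω → Ω) ∈ V := by
    rw [← Set.mem_preimage, hVeq]; exact hp
  obtain ⟨W, u, hu, hsub⟩ := isOpen_pi_iff.mp hV _ hpV
  obtain ⟨g, hgG, hg⟩ := h W
  have hmem : (g : Ω → Ω) ∈ V := by
    apply hsub
    intro a ha
    rw [hg a ha]
    exact (hu a ha).2
  have : g ∈ (G : Set (Equiv.Perm Ω))ᶜ := by rw [← hVeq]; exact hmem
  exact this hgG

lemma hjorth_lemA {I : Type*} [Countable Ω] (G : Subgroup (Equiv.Perm Ω))
    (hG : FTClosed G) (T : I → Set Ω)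
    (hfin : ∀ g ∈ G, ∀ i : I, {x | x ∈ T i ∧ g x ≠ x}.Finite) (i : I) :
    ∃ B : Finset Ω, (hjMov G T i B).Finite := by
  classical
  by_contra hcon
  push_neg at hcon
  obtain ⟨enc, henc⟩ := Countable.exists_injective_nat Ω
  let St := {q : Equiv.Perm Ω × Finset Ω //
    q.1 ∈ G ∧ ↑q.2 ⊆ T i ∧ ∀ x ∈ q.2, q.1 x ≠ x}
  have step : ∀ (n : ℕ) (p : St), ∃ q : St,
      (∀ ω ∈ p.1.2, q.1.1 ω = p.1.1 ω) ∧
      (∀ ω : Ω, enc ω ≤ n → q.1.1 ω = p.1.1 ω) ∧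
      (∀ ω : Ω, enc ω ≤ n → q.1.1⁻¹ ω = p.1.1⁻¹ ω) ∧
      p.1.2 ⊆ q.1.2 ∧ q.1.2.card = p.1.2.card + 1 := by
    rintro n ⟨⟨g, X⟩, hgG, hXT, hmv⟩
    have hEn : ({ω : Ω | enc ω ≤ n}).Finite :=
      Set.Finite.preimage henc.injOn (Set.finite_Iic n)
    set S : Set Ω := ↑X ∪ {ω : Ω | enc ω ≤ n} ∪ ((g⁻¹ : Equiv.Perm Ω) '' {ω : Ω | enc ω ≤ n})
      with hSdef
    have hS : S.Finite := (X.finite_toSet.union hEn).union (hEn.image _)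
    have hD : ({x | x ∈ T i ∧ g x ≠ x}).Finite := hfin g hgG i
    have hInf : ¬ (hjMov G T i hS.toFinset).Finite := hcon _
    obtain ⟨x, hxMov, hxavoid⟩ := ((Set.Infinite.diff hInf (hS.union hD)).nonempty)
    obtain ⟨hxT, h, hhG, hhfix, hhx⟩ := hxMov
    have hfixS : ∀ ω ∈ S, h ω = ω := fun ω hω => hhfix ω (hS.mem_toFinset.mpr hω)
    have hxS : x ∉ S := fun hx => hxavoid (Or.inl hx)
    have hxD : x ∉ {x | x ∈ T i ∧ g x ≠ x} := fun hx => hxavoid (Or.inr hx)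
    have hgx : g x = x := by
      by_contra h'
      exact hxD ⟨hxT, h'⟩
    have hxX : x ∉ X := fun h' => hxS (Or.inl (Or.inl h'))
    refine ⟨⟨(g * h, insert x X), G.mul_mem hgG hhG, ?_, ?_⟩, ?_, ?_, ?_, ?_, ?_⟩
    · rw [Finset.coe_insert]
      exact Set.insert_subset hxT hXT
    · intro y hy
      rcases Finset.mem_insert.mp hy with rfl | hyX
      · intro heq
        have h1 : g (h y) = y := heq
        have h2 : h y = g⁻¹ y := by
          have := congrArg (g⁻¹ : Equiv.Perm Ω) h1
          simpa using this
        have h3 : (g⁻¹ : Equiv.Perm Ω) y = y := by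
          conv_lhs => rw [← hgx]
          exact Equiv.Perm.inv_apply_self g y
        rw [h3] at h2
        exact hhx h2
      · have h1 : h y = y := hfixS y (Or.inl (Or.inl (Finset.mem_coe.mpr hyX)))
        show g (h y) ≠ y
        rw [h1]
        exact hmv y hyX
    · intro ω hω
      show g (h ω) = g ω
      rw [hfixS ω (Or.inl (Or.inl (Finset.mem_coe.mpr hω)))]
    · intro ω hω
      show g (h ω) = g ω
      rw [hfixS ω (Or.inl (Or.inr hω))]
    · intro ω hω
      show ((g * h)⁻¹ : Equiv.Perm Ω) ω = g⁻¹ ω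
      rw [mul_inv_rev]
      show h⁻¹ (g⁻¹ ω) = g⁻¹ ω
      have h1 : h (g⁻¹ ω) = g⁻¹ ω := hfixS _ (Or.inr ⟨ω, hω, rfl⟩)
      conv_lhs => rw [← h1]
      exact Equiv.Perm.inv_apply_self h _
    · exact Finset.subset_insert _ _
    · exact Finset.card_insert_of_notMem hxX
  choose f hf1 hf2 hf3 hf4 hf5 using step
  let s0 : St := ⟨(1, ∅), G.one_mem, by simp, by simp⟩
  let seq : ℕ → St := fun n => Nat.rec s0 f n
  have hseq : ∀ n, seq (n + 1) = f n (seq n) := fun n => rfl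
  let gs : ℕ → Equiv.Perm Ω := fun n => (seq n).1.1
  let Xs : ℕ → Finset Ω := fun n => (seq n).1.2
  have hXmono : ∀ n m, n ≤ m → Xs n ⊆ Xs m := by
    intro n m h
    induction m, h using Nat.le_induction with
    | base => exact Finset.Subset.refl _
    | succ m hm ih => exact ih.trans (hf4 m (seq m))
  have hagree : ∀ n m, n ≤ m → ∀ ω, enc ω ≤ n →
      gs m ω = gs n ω ∧ (gs m)⁻¹ ω = (gs n)⁻¹ ω := by
    intro n m h
    induction m, h using Nat.le_induction with
    | base => exact fun ω _ => ⟨rfl, rfl⟩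
    | succ m hm ih =>
      intro ω hω
      have h2 := hf2 m (seq m) ω (le_trans hω hm)
      have h3 := hf3 m (seq m) ω (le_trans hω hm)
      exact ⟨h2.trans (ih ω hω).1, h3.trans (ih ω hω).2⟩
  have hagreeX : ∀ n m, n ≤ m → ∀ ω ∈ Xs n, gs m ω = gs n ω := by
    intro n m h
    induction m, h using Nat.le_induction with
    | base => exact fun ω _ => rfl
    | succ m hm ih =>
      intro ω hω
      have h1 := hf1 m (seq m) ω (hXmono n m hm hω)
      exact h1.trans (ih ω hω)
  have hcard : ∀ n, (Xs n).card = n := by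
    intro n
    induction n with
    | zero => rfl
    | succ n ih => rw [show Xs (n+1) = (f n (seq n)).1.2 from rfl, hf5 n (seq n)]; exact by rw [ih]
  let P : Equiv.Perm Ω :=
    { toFun := fun ω => gs (enc ω) ω
      invFun := fun ω => (gs (enc ω))⁻¹ ω
      left_inv := by
        intro ω
        set y := gs (enc ω) ω with hy
        show (gs (enc y))⁻¹ y = ω
        set N := max (enc ω) (enc y) with hN
        have h1 : gs N ω = gs (enc ω) ω := (hagree (enc ω) N (le_max_left _ _) ω le_rfl).1
        have h2 : (gs N)⁻¹ y = (gs (enc y))⁻¹ y := (hagree (enc y) N (le_max_right _ _) y le_rfl).2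
        rw [← h2, hy, ← h1]
        exact Equiv.Perm.inv_apply_self _ _
      right_inv := by
        intro ω
        set y := (gs (enc ω))⁻¹ ω with hy
        show gs (enc y) y = ω
        set N := max (enc ω) (enc y) with hN
        have h1 : (gs N)⁻¹ ω = (gs (enc ω))⁻¹ ω := (hagree (enc ω) N (le_max_left _ _) ω le_rfl).2
        have h2 : gs N y = gs (enc y) y := (hagree (enc y) N (le_max_right _ _) y le_rfl).1
        rw [← h2, hy, ← h1]
        exact Equiv.Perm.apply_inv_self _ _ }
  have hPapp : ∀ ω, P ω = gs (enc ω) ω := fun ω => rfl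
  have hPG : P ∈ G := by
    apply hjorth_approx_mem G hG
    intro W
    refine ⟨gs (W.sup enc), (seq (W.sup enc)).2.1, ?_⟩
    intro ω hω
    rw [hPapp ω]
    exact (hagree (enc ω) (W.sup enc) (Finset.le_sup hω) ω le_rfl).1
  have hfinP := hfin P hPG i
  set c := hfinP.toFinset.card with hc
  have hsubset : Xs (c + 1) ⊆ hfinP.toFinset := by
    intro y hy
    rw [Set.Finite.mem_toFinset]
    refine ⟨(seq (c+1)).2.2.1 hy, ?_⟩
    rw [hPapp y]
    set N := max (c+1) (enc y) with hN
    have h1 : gs N y = gs (enc y) y := (hagree (enc y) N (le_max_right _ _) y le_rfl).1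
    have h2 : gs N y = gs (c+1) y := hagreeX (c+1) N (le_max_left _ _) y hy
    rw [← h1, h2]
    exact (seq (c+1)).2.2.2 y hy
  have := Finset.card_le_card hsubset
  rw [hcard (c+1)] at this
  omega

lemma hjorth_lemB {I : Type*} [DecidableEq Ω] (G : Subgroup (Equiv.Perm Ω)) (T : I → Set Ω)
    (hinv : ∀ i : I, ∀ g ∈ G, (g : Ω → Ω) '' T i = T i)
    (hfin : ∀ g ∈ G, ∀ i : I, {x | x ∈ T i ∧ g x ≠ x}.Finite)
    (hcover : (⋃ i : I, T i) = Set.univ) (i : I) (s : Ω) (B : Finset Ω)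
    (h1 : (hjMov G T i (insert s B)).Finite) : (hjMov G T i B).Finite := by
  classical
  have hsU : s ∈ ⋃ j : I, T j := by rw [hcover]; exact Set.mem_univ s
  obtain ⟨j', hsj'⟩ := Set.mem_iUnion.mp hsU
  have hmem : ∀ (j : I) (g : Equiv.Perm Ω), g ∈ G → ∀ x, x ∈ T j → g x ∈ T j := by
    intro j g hg x hx
    have h := (hinv j g hg)
    rw [← h]
    exact Set.mem_image_of_mem _ hx
  set K : Set (Equiv.Perm Ω) := {g | g ∈ G ∧ ∀ b ∈ B, (g : Equiv.Perm Ω) b = b} with hKdef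
  have hKinv : ∀ k, k ∈ K → k⁻¹ ∈ K := by
    rintro k ⟨hkG, hkB⟩
    refine ⟨G.inv_mem hkG, fun b hb => ?_⟩
    conv_lhs => rw [← hkB b hb]
    exact Equiv.Perm.inv_apply_self k b
  have hKmul : ∀ k, k ∈ K → ∀ k', k' ∈ K → k * k' ∈ K := by
    rintro k ⟨hkG, hkB⟩ k' ⟨hk'G, hk'B⟩
    refine ⟨G.mul_mem hkG hk'G, fun b hb => ?_⟩
    show k (k' b) = b
    rw [hk'B b hb, hkB b hb]
  set L : Set (Equiv.Perm Ω) := {g | g ∈ K ∧ (g : Equiv.Perm Ω) s = s} with hLdef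
  have hLiff : ∀ g : Equiv.Perm Ω, g ∈ L ↔ g ∈ G ∧ ∀ b ∈ insert s B, g b = b := by
    intro g
    constructor
    · rintro ⟨⟨hgG, hgB⟩, hgs⟩
      refine ⟨hgG, ?_⟩
      intro b hb
      rcases Finset.mem_insert.mp hb with rfl | hb'
      · exact hgs
      · exact hgB b hb'
    · rintro ⟨hgG, hgB⟩
      exact ⟨⟨hgG, fun b hb => hgB b (Finset.mem_insert_of_mem hb)⟩,
        hgB s (Finset.mem_insert_self _ _)⟩
  set F : Set Ω := hjMov G T i (insert s B) with hFdef
  have hFsub : F ⊆ T i := fun x hx => hx.1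
  have hLfix : ∀ l, l ∈ L → ∀ x, x ∈ T i → x ∉ F → l x = x := by
    intro l hl x hxT hxF
    by_contra hne
    exact hxF ⟨hxT, l, ((hLiff l).mp hl).1, ((hLiff l).mp hl).2, hne⟩
  have hLinv : ∀ l, l ∈ L → l⁻¹ ∈ L := by
    rintro l ⟨hlK, hls⟩
    refine ⟨hKinv l hlK, ?_⟩
    conv_lhs => rw [← hls]
    exact Equiv.Perm.inv_apply_self l s
  have hLF : ∀ l, l ∈ L → ∀ x, x ∈ F → l x ∈ F := by
    intro l hl x hxF
    by_cases hlx : l x = x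
    · rwa [hlx]
    · have hlG := ((hLiff l).mp hl).1
      have hT : l x ∈ T i := hmem i l hlG x (hFsub hxF)
      refine ⟨hT, l⁻¹, ((hLiff l⁻¹).mp (hLinv l hl)).1, ((hLiff _).mp (hLinv l hl)).2, ?_⟩
      rw [Equiv.Perm.inv_apply_self]
      exact fun h => hlx h.symm
  set rt : Equiv.Perm Ω → Ω → Ω := fun g x => if x ∈ T i then g x else x with hrtdef
  have hrtT : ∀ g x, x ∈ T i → rt g x = g x := by
    intro g x hx; rw [hrtdef]; exact if_pos hx
  have hrtn : ∀ g x, x ∉ T i → rt g x = x := by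
    intro g x hx; rw [hrtdef]; exact if_neg hx
  set Ffin := h1.toFinset with hFfindef
  have hmemF : ∀ x, x ∈ Ffin ↔ x ∈ F := fun x => h1.mem_toFinset
  have hRLfin : (rt '' L).Finite := by
    have hsub : rt '' L ⊆ Set.range (fun (u : {x // x ∈ Ffin} → {x // x ∈ Ffin}) (x : Ω) =>
        if h : x ∈ Ffin then (u ⟨x, h⟩ : Ω) else x) := by
      rintro _ ⟨l, hl, rfl⟩
      refine ⟨fun y => ⟨l y, (hmemF _).mpr (hLF l hl y ((hmemF y).mp y.2))⟩, ?_⟩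
      funext x
      by_cases hx : x ∈ Ffin
      · have hxF : x ∈ F := (hmemF x).mp hx
        simp only [dif_pos hx]
        rw [hrtT l x (hFsub hxF)]
      · simp only [dif_neg hx]
        by_cases hxT : x ∈ T i
        · rw [hrtT l x hxT]
          exact (hLfix l hl x hxT (fun hF' => hx ((hmemF x).mpr hF'))).symm
        · rw [hrtn l x hxT]
    exact (Set.finite_range _).subset hsub
  set O : Set Ω := (fun g : Equiv.Perm Ω => (g : Equiv.Perm Ω) s) '' K with hOdef
  have hOT : O ⊆ T j' := by
    rintro _ ⟨g, hgK, rfl⟩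
    exact hmem j' g hgK.1 s hsj'
  have hRKfin : (rt '' K).Finite := by
    by_cases hOfin : O.Finite
    · set rep : Ω → Equiv.Perm Ω := fun y =>
        if h : ∃ g, g ∈ K ∧ (g : Equiv.Perm Ω) s = y then h.choose else 1 with hrepdef
      have hrepP : ∀ y, y ∈ O → rep y ∈ K ∧ (rep y : Equiv.Perm Ω) s = y := by
        rintro y ⟨g, hg, rfl⟩
        have hex : ∃ g', g' ∈ K ∧ (g' : Equiv.Perm Ω) s = g s := ⟨g, hg, rfl⟩
        rw [hrepdef]
        simp only [dif_pos hex]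
        exact hex.choose_spec
      have hsub : rt '' K ⊆ (fun q : Ω × (Ω → Ω) => fun x : Ω =>
          if x ∈ T i then (rep q.1) (q.2 x) else x) '' (O ×ˢ (rt '' L)) := by
        rintro _ ⟨k, hk, rfl⟩
        have hyO : (k : Equiv.Perm Ω) s ∈ O := ⟨k, hk, rfl⟩
        obtain ⟨hrepK, hreps⟩ := hrepP _ hyO
        set l : Equiv.Perm Ω := (rep (k s))⁻¹ * k with hldef
        have hlL : l ∈ L := by
          refine ⟨hKmul _ (hKinv _ hrepK) _ hk, ?_⟩
          show (rep (k s))⁻¹ (k s) = s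
          have h' := congrArg ((rep (k s))⁻¹ : Equiv.Perm Ω) hreps
          rw [Equiv.Perm.inv_apply_self] at h'
          exact h'.symm
        refine ⟨(k s, rt l), ⟨hyO, ⟨l, hlL, rfl⟩⟩, ?_⟩
        funext x
        by_cases hxT : x ∈ T i
        · simp only [if_pos hxT]
          rw [hrtT l x hxT, hrtT k x hxT]
          show (rep (k s)) (((rep (k s))⁻¹ * k) x) = k x
          rw [Equiv.Perm.mul_apply, Equiv.Perm.apply_inv_self]
        · simp only [if_neg hxT]
          rw [hrtn k x hxT]
      exact ((hOfin.prod hRLfin).image _).subset hsub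
    · have hOinf : O.Infinite := hOfin
      by_contra hRK
      have hRKinf : (rt '' K).Infinite := hRK
      obtain ⟨R₀, hR₀sub, hR₀card⟩ := hRKinf.exists_subset_card_eq (hRLfin.toFinset.card + 1)
      set krep : (Ω → Ω) → Equiv.Perm Ω := fun r =>
        if h : ∃ k, k ∈ K ∧ rt k = r then h.choose else 1 with hkrepdef
      have hkrepP : ∀ r, r ∈ rt '' K → krep r ∈ K ∧ rt (krep r) = r := by
        rintro _ ⟨k, hk, rfl⟩
        have hex : ∃ k', k' ∈ K ∧ rt k' = rt k := ⟨k, hk, rfl⟩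
        rw [hkrepdef]
        simp only [dif_pos hex]
        exact hex.choose_spec
      have hDfin : (⋃ r ∈ R₀, {x | x ∈ T j' ∧ (krep r) x ≠ x}).Finite := by
        apply Set.Finite.biUnion R₀.finite_toSet
        intro r hr
        exact hfin _ (hkrepP r (hR₀sub hr)).1.1 j'
      obtain ⟨t, htOD⟩ := (hOinf.diff hDfin).nonempty
      have htO : t ∈ O := htOD.1
      have htD : t ∉ ⋃ r ∈ R₀, {x | x ∈ T j' ∧ (krep r) x ≠ x} := htOD.2
      obtain ⟨kstar, hkstarK, hkstars0⟩ := htO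
      have hkstars : (kstar : Equiv.Perm Ω) s = t := hkstars0
      have hfixt : ∀ r ∈ R₀, (krep r : Equiv.Perm Ω) t = t := by
        intro r hr
        by_contra hne
        exact htD (Set.mem_biUnion hr ⟨hOT htOD.1, hne⟩)
      have hmap : ∀ r ∈ R₀, rt (kstar⁻¹ * krep r * kstar) ∈ hRLfin.toFinset := by
        intro r hr
        rw [Set.Finite.mem_toFinset]
        refine ⟨kstar⁻¹ * krep r * kstar, ⟨?_, ?_⟩, rfl⟩
        · exact hKmul _ (hKmul _ (hKinv _ hkstarK) _ (hkrepP r (hR₀sub hr)).1) _ hkstarK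
        · show (kstar⁻¹ * krep r * kstar : Equiv.Perm Ω) s = s
          rw [Equiv.Perm.mul_apply, Equiv.Perm.mul_apply, hkstars, hfixt r hr, ← hkstars,
            Equiv.Perm.inv_apply_self]
      have hinj : Set.InjOn (fun r => rt (kstar⁻¹ * krep r * kstar)) ↑R₀ := by
        intro r₁ h₁ r₂ h₂ heq
        have e1 : rt (krep r₁) = rt (krep r₂) := by
          funext x
          by_cases hxT : x ∈ T i
          · have hx' : (kstar⁻¹ : Equiv.Perm Ω) x ∈ T i :=
              hmem i _ (G.inv_mem hkstarK.1) x hxT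
            have e2 : rt (kstar⁻¹ * krep r₁ * kstar) ((kstar⁻¹ : Equiv.Perm Ω) x) =
                rt (kstar⁻¹ * krep r₂ * kstar) ((kstar⁻¹ : Equiv.Perm Ω) x) := congrFun heq _
            rw [hrtT _ _ hx', hrtT _ _ hx'] at e2
            have e3 : ∀ kk : Equiv.Perm Ω,
                kk x = kstar ((kstar⁻¹ * kk * kstar) ((kstar⁻¹ : Equiv.Perm Ω) x)) := by
              intro kk
              simp [Equiv.Perm.mul_apply]
            rw [hrtT _ _ hxT, hrtT _ _ hxT, e3 (krep r₁), e3 (krep r₂), e2]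
          · rw [hrtn _ _ hxT, hrtn _ _ hxT]
        rw [← (hkrepP r₁ (hR₀sub h₁)).2, ← (hkrepP r₂ (hR₀sub h₂)).2, e1]
      have hcard := Finset.card_le_card_of_injOn _ hmap hinj
      rw [hR₀card] at hcard
      omega
  have hcover' : hjMov G T i B ⊆ ⋃ r ∈ rt '' K, {x | x ∈ T i ∧ r x ≠ x} := by
    rintro x ⟨hxT, g, hgG, hgB, hgx⟩
    refine Set.mem_biUnion (⟨g, ⟨hgG, hgB⟩, rfl⟩ : rt g ∈ rt '' K) ⟨hxT, ?_⟩
    rw [hrtT g x hxT]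
    exact hgx
  refine Set.Finite.subset (Set.Finite.biUnion hRKfin ?_) hcover'
  rintro _ ⟨k, hk, rfl⟩
  refine (hfin k hk.1 i).subset ?_
  rintro x ⟨hxT, hne⟩
  refine ⟨hxT, ?_⟩
  rw [hrtT k x hxT] at hne
  exact hne


end HjorthAux

/-- Theorem 11.4, Hjorth. -/
theorem stmt19 {Ω : Type u} [Countable Ω] {I : Type*} (G : Subgroup (Equiv.Perm Ω))
    (hG : FTClosed G) (T : I → Set Ω)
    (hinv : ∀ i : I, ∀ g ∈ G, (g : Ω → Ω) '' T i = T i)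
    (hfin : ∀ g ∈ G, ∀ i : I, {x | x ∈ T i ∧ g x ≠ x}.Finite)
    (hcover : (⋃ i : I, T i) = Set.univ) :
    ∀ i : I,
      {f : T i → Ω | ∃ g ∈ G, ∀ x : T i, f x = g (x : Ω)}.Finite ∧
      {x | x ∈ T i ∧ ∃ g ∈ G, g x ≠ x}.Finite := by
  classical
  intro i
  have hM : (hjMov G T i ∅).Finite := by
    obtain ⟨B, hB⟩ := hjorth_lemA G hG T hfin i
    have key : ∀ B : Finset Ω, (hjMov G T i B).Finite → (hjMov G T i ∅).Finite := by
      intro B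
      induction B using Finset.induction_on with
      | empty => exact id
      | insert _ _ ha ih =>
        exact fun h => ih (hjorth_lemB G T hinv hfin hcover i _ _ h)
    exact key B hB
  constructor
  · set Mfin := hM.toFinset with hMfindef
    have hmemM : ∀ x, x ∈ Mfin ↔ x ∈ hjMov G T i ∅ := fun x => hM.mem_toFinset
    have hsub : {f : T i → Ω | ∃ g ∈ G, ∀ x : T i, f x = g (x : Ω)} ⊆
        Set.range (fun (u : {x // x ∈ Mfin} → {x // x ∈ Mfin}) (x : T i) =>
          if h : (x : Ω) ∈ Mfin then (u ⟨(x : Ω), h⟩ : Ω) else (x : Ω)) := by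
      rintro f ⟨g, hgG, hfg⟩
      have hmv : ∀ y : Ω, y ∈ Mfin → g y ∈ Mfin := by
        intro y hy
        have hyM := (hmemM y).mp hy
        by_cases hgy : g y = y
        · rwa [hgy]
        · rw [hmemM]
          refine ⟨?_, g⁻¹, G.inv_mem hgG, by simp, ?_⟩
          · have h := hinv i g hgG
            rw [← h]
            exact Set.mem_image_of_mem _ hyM.1
          · rw [Equiv.Perm.inv_apply_self]
            exact fun h => hgy h.symm
      refine ⟨fun y => ⟨g y, hmv y y.2⟩, ?_⟩
      funext x
      by_cases hx : (x : Ω) ∈ Mfin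
      · simp only [dif_pos hx]
        exact (hfg x).symm
      · simp only [dif_neg hx]
        have hgx : g (x : Ω) = (x : Ω) := by
          by_contra hne
          exact hx ((hmemM _).mpr ⟨x.2, g, hgG, by simp, hne⟩)
        rw [hfg x, hgx]
    exact (Set.finite_range _).subset hsub
  · refine hM.subset ?_
    rintro x ⟨hxT, g, hgG, hgx⟩
    exact ⟨hxT, g, hgG, by simp, hgx⟩
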